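/- Bounded time-average third moment under drift: Under the hypotheses that E[(Q_k(t+1) − Q_k(t))⁴ | Q(t)] ≤ D for all t, k and some finite D > 0, that E[‖Q(0)‖⁴] < ∞, and that the drift condition E[L(Q(t+1)) − L(Q(t)) | H(t)] ≤ B̃ − ε∑_k |Q_k(t)| holds with ε > 0, there is a finite constant b > 0 such that (1/M) ∑_{t=0}^{M−1} E[‖Q(t)‖³] ≤ b for all positive integers M. -/

import Mathlib

set_option maxHeartbeats 4000000
open MeasureTheory ProbabilityTheory Filter Topology


lemma min_cast_tendsto (x : ℝ) :
    Tendsto (fun n : ℕ => min x (n : ℝ)) atTop (𝓝 x) := by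
  refine Tendsto.congr' ?_ tendsto_const_nhds
  filter_upwards [eventually_ge_atTop ⌈x⌉₊] with n hn
  exact (min_eq_left ((Nat.le_ceil x).trans (Nat.cast_le.mpr hn))).symm

lemma pullout_nonneg {Ω : Type*} {m m0 : MeasurableSpace Ω} (hm : m ≤ m0)
    (μ : @Measure Ω m0) [IsProbabilityMeasure μ] {f g : Ω → ℝ} {c : ℝ}
    (hfm : Measurable[m] f) (hf0 : ∀ ω, 0 ≤ f ω) (hfint : Integrable f μ)
    (hgm : Measurable[m0] g) (hg0 : ∀ ω, 0 ≤ g ω) (hgint : Integrable g μ)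
    (hc0 : 0 ≤ c) (hc : μ[g|m] ≤ᵐ[μ] fun _ => c) :
    Integrable (fun ω => f ω * g ω) μ ∧ ∫ ω, f ω * g ω ∂μ ≤ c * ∫ ω, f ω ∂μ := by
  set F : ℕ → Ω → ℝ := fun n ω => min (f ω) n with hF
  have hFm : ∀ n, Measurable[m] (F n) := fun n => hfm.min measurable_const
  have hFm0 : ∀ n, Measurable[m0] (F n) := fun n => (hFm n).mono hm le_rfl
  have hF0 : ∀ n ω, 0 ≤ F n ω := fun n ω => le_min (hf0 ω) (Nat.cast_nonneg n)
  have hFb : ∀ n ω, ‖F n ω‖ ≤ (n : ℝ) := fun n ω => by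
    rw [Real.norm_eq_abs, abs_of_nonneg (hF0 n ω)]; exact min_le_right _ _
  have hFg_int : ∀ n, Integrable (fun ω => F n ω * g ω) μ := fun n =>
    hgint.bdd_mul (hFm0 n).aestronglyMeasurable (ae_of_all _ (hFb n))
  have hFint : ∀ n, Integrable (F n) μ :=
    fun n => hfint.mono' (hFm0 n).aestronglyMeasurable (ae_of_all _ fun ω => by
      rw [Real.norm_eq_abs, abs_of_nonneg (hF0 n ω)]; exact min_le_left _ _)
  have key : ∀ n, ∫ ω, F n ω * g ω ∂μ ≤ c * ∫ ω, f ω ∂μ := by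
    intro n
    have h1 : ∫ ω, F n ω * g ω ∂μ = ∫ ω, (μ[fun ω => F n ω * g ω|m]) ω ∂μ :=
      (integral_condExp hm).symm
    have h2 : (μ[fun ω => F n ω * g ω|m]) =ᵐ[μ] fun ω => F n ω * (μ[g|m]) ω :=
      condExp_mul_of_stronglyMeasurable_left (hFm n).stronglyMeasurable (hFg_int n) hgint
    have h3 : Integrable (fun ω => F n ω * (μ[g|m]) ω) μ :=
      integrable_condExp.bdd_mul (hFm0 n).aestronglyMeasurable (ae_of_all _ (hFb n))
    have h4 : Integrable (fun ω => F n ω * c) μ :=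
      (integrable_const c).bdd_mul (hFm0 n).aestronglyMeasurable (ae_of_all _ (hFb n))
    calc ∫ ω, F n ω * g ω ∂μ = ∫ ω, (μ[fun ω => F n ω * g ω|m]) ω ∂μ := h1
      _ = ∫ ω, F n ω * (μ[g|m]) ω ∂μ := integral_congr_ae h2
      _ ≤ ∫ ω, F n ω * c ∂μ := by
          refine integral_mono_ae h3 h4 ?_
          filter_upwards [hc] with ω hω
          exact mul_le_mul_of_nonneg_left hω (hF0 n ω)
      _ = (∫ ω, F n ω ∂μ) * c := by rw [integral_mul_const]
      _ ≤ (∫ ω, f ω ∂μ) * c := by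
          refine mul_le_mul_of_nonneg_right ?_ hc0
          exact integral_mono (hFint n) hfint fun ω => min_le_left _ _
      _ = c * ∫ ω, f ω ∂μ := mul_comm _ _
  -- lintegral bound
  have hmm : Measurable[m0] fun ω => f ω * g ω := (hfm.mono hm le_rfl).mul hgm
  have hfg0 : ∀ ω, 0 ≤ f ω * g ω := fun ω => mul_nonneg (hf0 ω) (hg0 ω)
  have htendsto : Tendsto (fun n => ∫⁻ ω, ENNReal.ofReal (F n ω * g ω) ∂μ) atTop
      (𝓝 (∫⁻ ω, ENNReal.ofReal (f ω * g ω) ∂μ)) := by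
    refine lintegral_tendsto_of_tendsto_of_monotone
      (fun n => ((hFm0 n).mul hgm).ennreal_ofReal.aemeasurable) ?_ ?_
    · refine ae_of_all _ fun ω => ?_
      intro a b hab
      exact ENNReal.ofReal_le_ofReal
        (mul_le_mul_of_nonneg_right (min_le_min le_rfl (Nat.cast_le.mpr hab)) (hg0 ω))
    · refine ae_of_all _ fun ω => ?_
      exact (ENNReal.continuous_ofReal.tendsto _).comp
        (((min_cast_tendsto (f ω)).mul_const _))
  have hle : ∫⁻ ω, ENNReal.ofReal (f ω * g ω) ∂μ ≤ ENNReal.ofReal (c * ∫ ω, f ω ∂μ) := by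
    refine le_of_tendsto htendsto (Eventually.of_forall fun n => ?_)
    rw [← ofReal_integral_eq_lintegral_ofReal (hFg_int n)
      (ae_of_all _ fun ω => mul_nonneg (hF0 n ω) (hg0 ω))]
    exact ENNReal.ofReal_le_ofReal (key n)
  have hint : Integrable (fun ω => f ω * g ω) μ := by
    refine ⟨hmm.aestronglyMeasurable, ?_⟩
    rw [hasFiniteIntegral_iff_ofReal (ae_of_all _ hfg0)]
    exact lt_of_le_of_lt hle ENNReal.ofReal_lt_top
  refine ⟨hint, ?_⟩
  rw [integral_eq_lintegral_of_nonneg_ae (ae_of_all _ hfg0) hmm.aestronglyMeasurable]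
  calc (∫⁻ ω, ENNReal.ofReal (f ω * g ω) ∂μ).toReal
      ≤ (ENNReal.ofReal (c * ∫ ω, f ω ∂μ)).toReal :=
        ENNReal.toReal_mono ENNReal.ofReal_ne_top hle
    _ = c * ∫ ω, f ω ∂μ := ENNReal.toReal_ofReal (mul_nonneg hc0 (integral_nonneg hf0))

lemma mul_integral_le_of_condexp_le {Ω : Type*} {m m0 : MeasurableSpace Ω} (hm : m ≤ m0)
    (μ : @Measure Ω m0) [IsProbabilityMeasure μ] {f g φ : Ω → ℝ}
    (hfm : Measurable[m] f) (hf0 : ∀ ω, 0 ≤ f ω)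
    (hgint : Integrable g μ) (hφint : Integrable φ μ)
    (hfg : Integrable (fun ω => f ω * g ω) μ) (hfφ : Integrable (fun ω => f ω * φ ω) μ)
    (hc : μ[g|m] ≤ᵐ[μ] φ) :
    ∫ ω, f ω * g ω ∂μ ≤ ∫ ω, f ω * φ ω ∂μ := by
  set F : ℕ → Ω → ℝ := fun n ω => min (f ω) n with hF
  have hFm : ∀ n, Measurable[m] (F n) := fun n => hfm.min measurable_const
  have hFm0 : ∀ n, Measurable[m0] (F n) := fun n => (hFm n).mono hm le_rfl
  have hF0 : ∀ n ω, 0 ≤ F n ω := fun n ω => le_min (hf0 ω) (Nat.cast_nonneg n)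
  have hFb : ∀ n ω, ‖F n ω‖ ≤ (n : ℝ) := fun n ω => by
    rw [Real.norm_eq_abs, abs_of_nonneg (hF0 n ω)]; exact min_le_right _ _
  have hFle : ∀ n ω, F n ω ≤ f ω := fun n ω => min_le_left _ _
  have hFg_int : ∀ n, Integrable (fun ω => F n ω * g ω) μ := fun n =>
    hgint.bdd_mul (hFm0 n).aestronglyMeasurable (ae_of_all _ (hFb n))
  have hFφ_int : ∀ n, Integrable (fun ω => F n ω * φ ω) μ := fun n =>
    hφint.bdd_mul (hFm0 n).aestronglyMeasurable (ae_of_all _ (hFb n))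
  have key : ∀ n, ∫ ω, F n ω * g ω ∂μ ≤ ∫ ω, F n ω * φ ω ∂μ := by
    intro n
    have h2 : (μ[fun ω => F n ω * g ω|m]) =ᵐ[μ] fun ω => F n ω * (μ[g|m]) ω :=
      condExp_mul_of_stronglyMeasurable_left (hFm n).stronglyMeasurable (hFg_int n) hgint
    have h3 : Integrable (fun ω => F n ω * (μ[g|m]) ω) μ :=
      integrable_condExp.bdd_mul (hFm0 n).aestronglyMeasurable (ae_of_all _ (hFb n))
    calc ∫ ω, F n ω * g ω ∂μ = ∫ ω, (μ[fun ω => F n ω * g ω|m]) ω ∂μ :=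
          (integral_condExp hm).symm
      _ = ∫ ω, F n ω * (μ[g|m]) ω ∂μ := integral_congr_ae h2
      _ ≤ ∫ ω, F n ω * φ ω ∂μ := by
          refine integral_mono_ae h3 (hFφ_int n) ?_
          filter_upwards [hc] with ω hω
          exact mul_le_mul_of_nonneg_left hω (hF0 n ω)
  have ht1 : Tendsto (fun n => ∫ ω, F n ω * g ω ∂μ) atTop (𝓝 (∫ ω, f ω * g ω ∂μ)) := by
    refine tendsto_integral_of_dominated_convergence (fun ω => |f ω * g ω|)
      (fun n => (hFg_int n).1) hfg.abs ?_ ?_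
    · intro n
      refine ae_of_all _ fun ω => ?_
      simp only [Real.norm_eq_abs, abs_mul]
      rw [abs_of_nonneg (hF0 n ω), abs_of_nonneg (hf0 ω)]
      exact mul_le_mul_of_nonneg_right (hFle n ω) (abs_nonneg _)
    · exact ae_of_all _ fun ω => (min_cast_tendsto (f ω)).mul_const _
  have ht2 : Tendsto (fun n => ∫ ω, F n ω * φ ω ∂μ) atTop (𝓝 (∫ ω, f ω * φ ω ∂μ)) := by
    refine tendsto_integral_of_dominated_convergence (fun ω => |f ω * φ ω|)
      (fun n => (hFφ_int n).1) hfφ.abs ?_ ?_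
    · intro n
      refine ae_of_all _ fun ω => ?_
      simp only [Real.norm_eq_abs, abs_mul]
      rw [abs_of_nonneg (hF0 n ω), abs_of_nonneg (hf0 ω)]
      exact mul_le_mul_of_nonneg_right (hFle n ω) (abs_nonneg _)
    · exact ae_of_all _ fun ω => (min_cast_tendsto (f ω)).mul_const _
  exact le_of_tendsto_of_tendsto' ht1 ht2 key

noncomputable def lyap {K : ℕ} (w : Fin K → ℝ) (q : Fin K → ℝ) : ℝ :=
  (1 / 2) * ∑ k, w k * q k ^ 2

def qHist {Ω : Type*} [MeasurableSpace Ω] {K : ℕ} (Q : ℕ → Ω → Fin K → ℝ) (t : ℕ) :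
    MeasurableSpace Ω :=
  ⨆ i ∈ Finset.range (t + 1), MeasurableSpace.comap (Q i) inferInstance

theorem bounded_time_average_third_moment
    {Ω : Type*} [MeasureSpace Ω] [IsProbabilityMeasure (ℙ : Measure Ω)]
    {K : ℕ} (w : Fin K → ℝ) (hw : ∀ k, 0 < w k)
    (Q : ℕ → Ω → Fin K → ℝ)
    (hQm : ∀ t, Measurable (Q t))
    (hLint : ∀ t, Integrable (fun ω => lyap w (Q t ω)) ℙ)
    (D : ℝ) (hD : 0 < D)
    (hd4int : ∀ t k, Integrable (fun ω => (Q (t + 1) ω k - Q t ω k) ^ 4) ℙ)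
    (hd4 : ∀ t k, ∀ᵐ ω ∂(ℙ : Measure Ω),
      ((ℙ : Measure Ω)[fun ω' => (Q (t + 1) ω' k - Q t ω' k) ^ 4 |
          MeasurableSpace.comap (Q t) inferInstance]) ω ≤ D)
    (hL0four : Integrable (fun ω => Real.sqrt (lyap w (Q 0 ω)) ^ 4) ℙ)
    (Btil ε : ℝ) (hB : 0 < Btil) (hε : 0 < ε)
    (hdrift : ∀ t, ∀ᵐ ω ∂(ℙ : Measure Ω),
      ((ℙ : Measure Ω)[fun ω' => lyap w (Q (t + 1) ω') - lyap w (Q t ω') | qHist Q t]) ω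
        ≤ Btil - ε * ∑ k, |Q t ω k|) :
    ∃ b > 0, ∀ M : ℕ, 0 < M →
      (1 / (M : ℝ)) * ∑ t ∈ Finset.range M,
        ∫ ω, Real.sqrt (lyap w (Q t ω)) ^ 3 ∂(ℙ : Measure Ω) ≤ b := by
  classical
  rcases Nat.eq_zero_or_pos K with hK0 | hKpos
  · subst hK0
    refine ⟨1, one_pos, fun M hM => ?_⟩
    have h0 : ∀ t (ω : Ω), lyap w (Q t ω) = 0 := by intro t ω; simp [lyap]
    simp only [h0, Real.sqrt_zero]
    norm_num
  set μ : Measure Ω := ℙ with hμ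
  set L : ℕ → Ω → ℝ := fun t ω => lyap w (Q t ω) with hLdef
  set d : ℕ → Fin K → Ω → ℝ := fun t k ω => Q (t + 1) ω k - Q t ω k with hddef
  -- facts depending on the definitions of L and d
  have hL_eq : ∀ t (ω : Ω), lyap w (Q t ω) = L t ω := fun _ _ => rfl
  have hd_eq : ∀ t k (ω : Ω), Q (t + 1) ω k - Q t ω k = d t k ω := fun _ _ _ => rfl
  have hL0 : ∀ t ω, 0 ≤ L t ω := by
    intro t ω
    refine mul_nonneg (by norm_num) (Finset.sum_nonneg fun k _ => ?_)
    exact mul_nonneg (hw k).le (sq_nonneg _)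
  have hlyapm : Measurable (fun q : Fin K → ℝ => lyap w q) := by
    apply Measurable.const_mul
    exact Finset.measurable_sum _ fun k _ => ((measurable_pi_apply k).pow_const 2).const_mul _
  have hQt_comap : ∀ t, Measurable[MeasurableSpace.comap (Q t) inferInstance] (Q t) :=
    fun t => Measurable.of_comap_le le_rfl
  have hLm : ∀ t, Measurable (L t) := fun t => hlyapm.comp (hQm t)
  have hQkm : ∀ t (k : Fin K), Measurable (fun ω => Q t ω k) :=
    fun t k => (measurable_pi_apply k).comp (hQm t)
  have hdm : ∀ t k, Measurable (d t k) := fun t k => (hQkm (t+1) k).sub (hQkm t k)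
  have hL_comap : ∀ t, Measurable[MeasurableSpace.comap (Q t) inferInstance] (L t) :=
    fun t => hlyapm.comp (hQt_comap t)
  have hQk2_comap : ∀ t (k : Fin K),
      Measurable[MeasurableSpace.comap (Q t) inferInstance] (fun ω => Q t ω k ^ 2) :=
    fun t k => ((measurable_pi_apply k).comp (hQt_comap t)).pow_const 2
  have hL_hist : ∀ t, Measurable[qHist Q t] (L t) := by
    intro t
    exact (hL_comap t).mono (le_iSup₂ (f := fun i (_ : i ∈ Finset.range (t + 1)) =>
      MeasurableSpace.comap (Q i) inferInstance) t (Finset.self_mem_range_succ t)) le_rfl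
  have hQ2L : ∀ t (k : Fin K) ω, (Q t ω k) ^ 2 ≤ (2 / w k) * L t ω := by
    intro t k ω
    have h2 : w k * Q t ω k ^ 2 ≤ ∑ j, w j * Q t ω j ^ 2 := Finset.single_le_sum
      (f := fun j => w j * Q t ω j ^ 2)
      (fun j _ => mul_nonneg (hw j).le (sq_nonneg _)) (Finset.mem_univ k)
    have h3 : L t ω = 1 / 2 * ∑ j, w j * Q t ω j ^ 2 := rfl
    rw [h3, div_mul_eq_mul_div, le_div_iff₀ (hw k)]
    linarith
  have halg : ∀ t ω, L (t + 1) ω = L t ω +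
      ((∑ k, w k * Q t ω k * d t k ω) + ∑ k, (w k / 2) * (d t k ω) ^ 2) := by
    intro t ω
    have h1 : ∀ k, Q (t + 1) ω k = Q t ω k + d t k ω := fun k => by
      rw [← hd_eq t k ω]; ring
    have h2 : L (t + 1) ω = 1 / 2 * ∑ k, w k * (Q t ω k + d t k ω) ^ 2 := by
      rw [← hL_eq (t+1) ω]
      simp only [lyap]
      congr 1
      exact Finset.sum_congr rfl fun k _ => by rw [h1 k]
    have h3 : L t ω = 1 / 2 * ∑ j, w j * Q t ω j ^ 2 := rfl
    rw [h2, h3, Finset.mul_sum, Finset.mul_sum, ← Finset.sum_add_distrib,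
      ← Finset.sum_add_distrib]
    exact Finset.sum_congr rfl fun k _ => by ring
  have hptQ : ∀ t ω, 2 * L t ω ≤ (∑ j, w j) * (∑ k, |Q t ω k|) ^ 2 := by
    intro t ω
    have h3 : L t ω = 1 / 2 * ∑ j, w j * Q t ω j ^ 2 := rfl
    rw [h3, Finset.sum_mul]
    have : ∀ k : Fin K, w k * Q t ω k ^ 2 ≤ w k * (∑ j, |Q t ω j|) ^ 2 := by
      intro k
      refine mul_le_mul_of_nonneg_left ?_ (hw k).le
      rw [← sq_abs]
      refine pow_le_pow_left₀ (abs_nonneg _) ?_ 2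
      exact Finset.single_le_sum (f := fun j => |Q t ω j|)
        (fun j _ => abs_nonneg _) (Finset.mem_univ k)
    calc 2 * (1 / 2 * ∑ j, w j * Q t ω j ^ 2) = ∑ j, w j * Q t ω j ^ 2 := by ring
      _ ≤ ∑ j, w j * (∑ i, |Q t ω i|) ^ 2 := Finset.sum_le_sum fun k _ => this k
  -- rewrite hypotheses in terms of L and d only
  simp only [hd_eq] at hd4int hd4
  simp only [hL_eq] at hLint hL0four hdrift
  simp only [hL_eq]
  clear_value L d
  clear hLdef hddef
  -- abstract development
  have hHist_le : ∀ t, qHist Q t ≤ (inferInstance : MeasurableSpace Ω) := by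
    intro t
    exact iSup₂_le fun i _ => (hQm i).comap_le
  have hcomap_le : ∀ t, MeasurableSpace.comap (Q t) inferInstance ≤ _ :=
    fun t => (hQm t).comap_le
  have habmul : ∀ a b : ℝ, |a * b| ≤ (a ^ 2 + b ^ 2) / 2 := by
    intro a b
    rw [abs_mul]
    nlinarith [sq_nonneg (|a| - |b|), sq_abs a, sq_abs b, abs_nonneg a, abs_nonneg b]
  have hQk2int : ∀ t k, Integrable (fun ω => (Q t ω k) ^ 2) μ := by
    intro t k
    refine (Integrable.const_mul (hLint t) (2 / w k)).mono'
      ((hQkm t k).pow_const 2).aestronglyMeasurable (ae_of_all _ fun ω => ?_)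
    rw [Real.norm_eq_abs, abs_of_nonneg (sq_nonneg _)]
    exact hQ2L t k ω
  have habsQint : ∀ t k, Integrable (fun ω => |Q t ω k|) μ := by
    intro t k
    refine (((integrable_const (1:ℝ)).add (hQk2int t k)).div_const 2).mono'
      (hQkm t k).abs.aestronglyMeasurable (ae_of_all _ fun ω => ?_)
    rw [Real.norm_eq_abs, abs_abs]
    simp only [Pi.add_apply]
    nlinarith [sq_nonneg (|Q t ω k| - 1), sq_abs (Q t ω k)]
  have hd2int : ∀ t k, Integrable (fun ω => (d t k ω) ^ 2) μ := by
    intro t k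
    refine (((integrable_const (1:ℝ)).add (hd4int t k)).div_const 2).mono'
      ((hdm t k).pow_const 2).aestronglyMeasurable (ae_of_all _ fun ω => ?_)
    rw [Real.norm_eq_abs, abs_of_nonneg (sq_nonneg _)]
    simp only [Pi.add_apply]
    nlinarith [sq_nonneg ((d t k ω) ^ 2 - 1)]
  have hphiint : ∀ t, Integrable (fun ω => Btil - ε * ∑ k, |Q t ω k|) μ := by
    intro t
    exact (integrable_const Btil).sub
      ((integrable_finset_sum _ fun k _ => habsQint t k).const_mul ε)
  set cd : ℝ := (1 + D) / 2 with hcddef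
  have hcd0 : 0 < cd := by positivity
  have hcond2 : ∀ t k,
      (μ[fun ω => (d t k ω) ^ 2 | MeasurableSpace.comap (Q t) inferInstance])
        ≤ᵐ[μ] fun _ => cd := by
    intro t k
    have hub : (fun ω => (d t k ω) ^ 2) ≤ᵐ[μ]
        fun ω => (1:ℝ)/2 + (1/2) * (d t k ω) ^ 4 := by
      refine ae_of_all _ fun ω => ?_
      show (d t k ω) ^ 2 ≤ 1/2 + 1/2 * (d t k ω) ^ 4
      nlinarith [sq_nonneg ((d t k ω) ^ 2 - 1)]
    have hmono := condExp_mono (m := MeasurableSpace.comap (Q t) inferInstance)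
      (hd2int t k) ((integrable_const ((1:ℝ)/2)).add ((hd4int t k).const_mul (1/2))) hub
    have heq : (fun ω => (1:ℝ)/2 + (1/2) * (d t k ω) ^ 4)
        = (fun _ : Ω => (1:ℝ)/2) + (1/2 : ℝ) • (fun ω => (d t k ω) ^ 4) := by
      funext ω; simp [smul_eq_mul]
    have hint4 : Integrable ((1/2 : ℝ) • fun ω => (d t k ω) ^ 4) μ := (hd4int t k).smul _
    have hadd : (μ[fun ω => (1:ℝ)/2 + (1/2) * (d t k ω) ^ 4 |
          MeasurableSpace.comap (Q t) inferInstance]) =ᵐ[μ]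
        (μ[fun _ : Ω => (1:ℝ)/2 | MeasurableSpace.comap (Q t) inferInstance])
          + (μ[(1/2 : ℝ) • fun ω => (d t k ω) ^ 4 |
              MeasurableSpace.comap (Q t) inferInstance]) := by
      rw [heq]
      exact condExp_add (integrable_const _) hint4 _
    have hsmul : (μ[(1/2 : ℝ) • fun ω => (d t k ω) ^ 4 |
          MeasurableSpace.comap (Q t) inferInstance]) =ᵐ[μ]
        (1/2 : ℝ) • (μ[fun ω => (d t k ω) ^ 4 |
          MeasurableSpace.comap (Q t) inferInstance]) := condExp_smul _ _ _
    have hconst := condExp_const (hcomap_le t) ((1:ℝ)/2) (μ := μ)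
    filter_upwards [hmono, hadd, hsmul, hd4 t k] with ω h1 h2 h3 h4
    calc (μ[fun ω => (d t k ω) ^ 2 | MeasurableSpace.comap (Q t) inferInstance]) ω
        ≤ (μ[fun ω => (1:ℝ)/2 + (1/2) * (d t k ω) ^ 4 |
            MeasurableSpace.comap (Q t) inferInstance]) ω := h1
      _ = (1:ℝ)/2 + (1/2) * (μ[fun ω => (d t k ω) ^ 4 |
            MeasurableSpace.comap (Q t) inferInstance]) ω := by
          rw [h2]
          simp only [Pi.add_apply, h3, Pi.smul_apply, smul_eq_mul, hconst]
      _ ≤ (1:ℝ)/2 + (1/2) * D := by linarith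
      _ = cd := by rw [hcddef]; ring
  have hd4I : ∀ t k, ∫ ω, (d t k ω) ^ 4 ∂μ ≤ D := by
    intro t k
    have h := integral_mono_ae (μ := μ) integrable_condExp (integrable_const D) (hd4 t k)
    rw [integral_condExp (hcomap_le t)] at h
    simpa [measure_univ] using h
  have hQ2I : ∀ t k, ∫ ω, (Q t ω k) ^ 2 ∂μ ≤ (2 / w k) * ∫ ω, L t ω ∂μ := by
    intro t k
    calc ∫ ω, (Q t ω k) ^ 2 ∂μ ≤ ∫ ω, (2 / w k) * L t ω ∂μ :=
          integral_mono (hQk2int t k) ((hLint t).const_mul _) (hQ2L t k)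
      _ = (2 / w k) * ∫ ω, L t ω ∂μ := integral_const_mul _ _
  have hLI0 : ∀ t, 0 ≤ ∫ ω, L t ω ∂μ := fun t => integral_nonneg (hL0 t)
  -- constants
  set W : ℝ := ∑ j, w j with hWdef
  have hW : 0 < W := by
    haveI : Nonempty (Fin K) := ⟨⟨0, hKpos⟩⟩
    exact Finset.sum_pos (fun j _ => hw j) Finset.univ_nonempty
  set c₀ : ℝ := Real.sqrt (2 / W) with hc₀def
  have hc₀ : 0 < c₀ := Real.sqrt_pos.mpr (by positivity)
  set CS : ℝ := (K : ℝ) * (1 + D) * W with hCSdef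
  have hCS : 0 < CS := by
    have : (0:ℝ) < (K:ℝ) := by exact_mod_cast hKpos
    positivity
  set CR : ℝ := (K : ℝ) * D * (∑ k, (w k) ^ 2) / 4 with hCRdef
  have hCR : 0 ≤ CR := by
    have h1 : (0:ℝ) ≤ (K:ℝ) := Nat.cast_nonneg _
    have h2 : (0:ℝ) ≤ ∑ k, (w k) ^ 2 := Finset.sum_nonneg fun k _ => sq_nonneg _
    positivity
  set a : ℝ := 2 * Btil + 2 * CS with hadef
  have ha : 0 < a := by positivity
  set θ : ℝ := ε * c₀ / a with hθdef
  have hθ : 0 < θ := by positivity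
  have haθ : a * θ = ε * c₀ := by rw [hθdef]; field_simp
  set C₄ : ℝ := a / θ ^ 2 + 2 * CR with hC₄def
  have hC₄ : 0 < C₄ := by positivity
  clear_value C₄
  -- the key one-step estimate
  have step : ∀ t, Integrable (fun ω => (L t ω) ^ 2) μ →
      Integrable (fun ω => (L (t + 1) ω) ^ 2) μ ∧
      (∫ ω, (L (t + 1) ω) ^ 2 ∂μ) - ∫ ω, (L t ω) ^ 2 ∂μ ≤
        -(ε * c₀) * ∫ ω, Real.sqrt (L t ω) ^ 3 ∂μ + C₄ := by
    intro t hA2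
    set S : Ω → ℝ := fun ω => ∑ k, w k * Q t ω k * d t k ω with hSdef
    set R : Ω → ℝ := fun ω => ∑ k, (w k / 2) * (d t k ω) ^ 2 with hRdef
    have hSm : Measurable S := Finset.measurable_sum _ fun k _ =>
      ((hQkm t k).const_mul _).mul (hdm t k)
    have hRm : Measurable R := Finset.measurable_sum _ fun k _ =>
      ((hdm t k).pow_const 2).const_mul _
    have P1 : ∀ k : Fin K, Integrable (fun ω => Q t ω k ^ 2 * d t k ω ^ 2) μ ∧
        ∫ ω, Q t ω k ^ 2 * d t k ω ^ 2 ∂μ ≤ cd * ∫ ω, Q t ω k ^ 2 ∂μ := fun k =>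
      pullout_nonneg (hcomap_le t) μ (hQk2_comap t k) (fun ω => sq_nonneg _)
        (hQk2int t k) ((hdm t k).pow_const 2) (fun ω => sq_nonneg _) (hd2int t k)
        hcd0.le (hcond2 t k)
    have P2 : ∀ k : Fin K, Integrable (fun ω => L t ω * d t k ω ^ 2) μ ∧
        ∫ ω, L t ω * d t k ω ^ 2 ∂μ ≤ cd * ∫ ω, L t ω ∂μ := fun k =>
      pullout_nonneg (hcomap_le t) μ (hL_comap t) (hL0 t) (hLint t)
        ((hdm t k).pow_const 2) (fun ω => sq_nonneg _) (hd2int t k) hcd0.le (hcond2 t k)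
    have hSint : Integrable S μ := by
      refine integrable_finset_sum _ fun k _ => ?_
      refine ((((hQk2int t k).add (hd2int t k)).div_const 2).const_mul (w k)).mono'
        (((hQkm t k).const_mul _).mul (hdm t k)).aestronglyMeasurable
        (ae_of_all _ fun ω => ?_)
      rw [Real.norm_eq_abs]
      simp only [Pi.add_apply]
      calc |w k * Q t ω k * d t k ω| = w k * |Q t ω k * d t k ω| := by
            rw [mul_assoc, abs_mul, abs_of_pos (hw k)]
        _ ≤ w k * ((Q t ω k ^ 2 + d t k ω ^ 2) / 2) :=
            mul_le_mul_of_nonneg_left (habmul _ _) (hw k).le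
    have hRint : Integrable R μ :=
      integrable_finset_sum _ fun k _ => (hd2int t k).const_mul _
    have hLS_int : Integrable (fun ω => L t ω * S ω) μ := by
      have hbint : Integrable (fun ω =>
          ∑ k, ((L t ω) ^ 2 + (w k / 2) * (L t ω * d t k ω ^ 2))) μ :=
        integrable_finset_sum _ fun k _ => hA2.add ((P2 k).1.const_mul _)
      refine hbint.mono' ((hLm t).mul hSm).aestronglyMeasurable (ae_of_all _ fun ω => ?_)
      rw [Real.norm_eq_abs]
      have hSabs : |S ω| ≤ ∑ k, |w k * Q t ω k * d t k ω| := by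
        simp only [hSdef]
        exact Finset.abs_sum_le_sum_abs _ _
      calc |L t ω * S ω| = L t ω * |S ω| := by rw [abs_mul, abs_of_nonneg (hL0 t ω)]
        _ ≤ L t ω * ∑ k, |w k * Q t ω k * d t k ω| :=
            mul_le_mul_of_nonneg_left hSabs (hL0 t ω)
        _ = ∑ k, L t ω * |w k * Q t ω k * d t k ω| := by rw [Finset.mul_sum]
        _ ≤ ∑ k, ((L t ω) ^ 2 + (w k / 2) * (L t ω * d t k ω ^ 2)) := by
            refine Finset.sum_le_sum fun k _ => ?_
            have h1 : |w k * Q t ω k * d t k ω| = w k * |Q t ω k * d t k ω| := by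
              rw [mul_assoc, abs_mul, abs_of_pos (hw k)]
            rw [h1]
            have h2 := mul_le_mul_of_nonneg_left (habmul (Q t ω k) (d t k ω)) (hL0 t ω)
            have h3 : L t ω * Q t ω k ^ 2 ≤ (2 / w k) * (L t ω) ^ 2 := by
              nlinarith [mul_le_mul_of_nonneg_left (hQ2L t k ω) (hL0 t ω)]
            have h4 : (w k / 2) * ((2 / w k) * (L t ω) ^ 2) = (L t ω) ^ 2 := by
              have hwk : w k ≠ 0 := (hw k).ne'
              field_simp
            calc L t ω * (w k * |Q t ω k * d t k ω|)
                = w k * (L t ω * |Q t ω k * d t k ω|) := by ring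
              _ ≤ w k * (L t ω * ((Q t ω k ^ 2 + d t k ω ^ 2) / 2)) :=
                  mul_le_mul_of_nonneg_left h2 (hw k).le
              _ = (w k / 2) * (L t ω * Q t ω k ^ 2)
                  + (w k / 2) * (L t ω * d t k ω ^ 2) := by ring
              _ ≤ (w k / 2) * ((2 / w k) * (L t ω) ^ 2)
                  + (w k / 2) * (L t ω * d t k ω ^ 2) := by
                  have h5 : (0:ℝ) ≤ w k / 2 := by linarith [hw k]
                  nlinarith [mul_le_mul_of_nonneg_left h3 h5]
              _ = (L t ω) ^ 2 + (w k / 2) * (L t ω * d t k ω ^ 2) := by rw [h4]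
    have hLR_eq : (fun ω => L t ω * R ω)
        = fun ω => ∑ k, (w k / 2) * (L t ω * d t k ω ^ 2) := by
      funext ω
      show L t ω * (∑ k, (w k / 2) * (d t k ω) ^ 2) = _
      rw [Finset.mul_sum]
      exact Finset.sum_congr rfl fun k _ => by ring
    have hLR_int : Integrable (fun ω => L t ω * R ω) μ := by
      rw [hLR_eq]
      exact integrable_finset_sum _ fun k _ => ((P2 k).1.const_mul _)
    have hΔ_eq : ∀ ω, L (t+1) ω - L t ω = S ω + R ω := fun ω => by rw [halg t ω]; ring
    have hLΔ_eq : (fun ω => L t ω * (L (t+1) ω - L t ω))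
        = fun ω => L t ω * S ω + L t ω * R ω := funext fun ω => by rw [hΔ_eq ω]; ring
    have hLΔ_int : Integrable (fun ω => L t ω * (L (t+1) ω - L t ω)) μ := by
      rw [hLΔ_eq]; exact hLS_int.add hLR_int
    have hLφ_int : Integrable (fun ω => L t ω * (Btil - ε * ∑ k, |Q t ω k|)) μ := by
      have hbint : Integrable (fun ω => Btil * L t ω +
          ε * ∑ k, ((L t ω) ^ 2 + Q t ω k ^ 2) / 2) μ :=
        ((hLint t).const_mul _).add ((integrable_finset_sum _ fun k _ =>
          ((hA2.add (hQk2int t k)).div_const 2)).const_mul _)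
      refine hbint.mono' ((hLm t).mul (measurable_const.sub
        ((Finset.measurable_sum _ fun k _ => (hQkm t k).abs).const_mul ε))).aestronglyMeasurable
        (ae_of_all _ fun ω => ?_)
      rw [Real.norm_eq_abs, abs_mul, abs_of_nonneg (hL0 t ω)]
      have hsum0 : 0 ≤ ∑ k, |Q t ω k| := Finset.sum_nonneg fun k _ => abs_nonneg _
      have habs : |(Btil - ε * ∑ k, |Q t ω k|)| ≤ Btil + ε * ∑ k, |Q t ω k| := by
        rw [abs_le]
        constructor
        · nlinarith [mul_nonneg hε.le hsum0]
        · nlinarith [mul_nonneg hε.le hsum0]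
      calc L t ω * |(Btil - ε * ∑ k, |Q t ω k|)|
          ≤ L t ω * (Btil + ε * ∑ k, |Q t ω k|) :=
            mul_le_mul_of_nonneg_left habs (hL0 t ω)
        _ = Btil * L t ω + ε * (L t ω * ∑ k, |Q t ω k|) := by ring
        _ = Btil * L t ω + ε * ∑ k, L t ω * |Q t ω k| := by rw [Finset.mul_sum]
        _ ≤ Btil * L t ω + ε * ∑ k, ((L t ω) ^ 2 + Q t ω k ^ 2) / 2 := by
            refine add_le_add_right (mul_le_mul_of_nonneg_left
              (Finset.sum_le_sum fun k _ => ?_) hε.le) _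
            have h1 : L t ω * |Q t ω k| = |L t ω * Q t ω k| := by
              rw [abs_mul, abs_of_nonneg (hL0 t ω)]
            rw [h1]
            exact habmul _ _
    have hdriftI : ∫ ω, L t ω * (L (t+1) ω - L t ω) ∂μ ≤
        ∫ ω, L t ω * (Btil - ε * ∑ k, |Q t ω k|) ∂μ :=
      mul_integral_le_of_condexp_le (hHist_le t) μ (hL_hist t) (hL0 t)
        ((hLint (t+1)).sub (hLint t)) (hphiint t) hLΔ_int hLφ_int (hdrift t)
    have hsq3int : Integrable (fun ω => Real.sqrt (L t ω) ^ 3) μ := by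
      refine ((hLint t).add hA2).mono'
        (((hLm t).sqrt).pow_const 3).aestronglyMeasurable (ae_of_all _ fun ω => ?_)
      rw [Real.norm_eq_abs, abs_of_nonneg (pow_nonneg (Real.sqrt_nonneg _) 3)]
      simp only [Pi.add_apply]
      have hs0 : 0 ≤ Real.sqrt (L t ω) := Real.sqrt_nonneg _
      have hs2 : Real.sqrt (L t ω) ^ 2 = L t ω := Real.sq_sqrt (hL0 t ω)
      conv_rhs => rw [← hs2]
      nlinarith [mul_nonneg (sq_nonneg (Real.sqrt (L t ω)))
        (sq_nonneg (Real.sqrt (L t ω) - 1)), sq_nonneg (Real.sqrt (L t ω))]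
    have hpt : ∀ ω, L t ω * (Btil - ε * ∑ k, |Q t ω k|) ≤
        Btil * L t ω - (ε * c₀) * Real.sqrt (L t ω) ^ 3 := by
      intro ω
      have hsum0 : 0 ≤ ∑ k, |Q t ω k| := Finset.sum_nonneg fun k _ => abs_nonneg _
      have h2 : (2 / W) * L t ω ≤ (∑ k, |Q t ω k|) ^ 2 := by
        rw [div_mul_eq_mul_div, div_le_iff₀ hW]
        nlinarith [hptQ t ω]
      have h3 : Real.sqrt ((2 / W) * L t ω) ≤ ∑ k, |Q t ω k| := by
        rw [show (∑ k, |Q t ω k|) = Real.sqrt ((∑ k, |Q t ω k|) ^ 2) from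
          (Real.sqrt_sq hsum0).symm]
        exact Real.sqrt_le_sqrt h2
      have h4 : Real.sqrt ((2 / W) * L t ω) = c₀ * Real.sqrt (L t ω) := by
        rw [hc₀def]
        exact Real.sqrt_mul (by positivity) _
      have h5 : c₀ * Real.sqrt (L t ω) ^ 3 ≤ L t ω * ∑ k, |Q t ω k| := by
        have h6 : Real.sqrt (L t ω) ^ 3 = L t ω * Real.sqrt (L t ω) := by
          rw [pow_succ, Real.sq_sqrt (hL0 t ω)]
        rw [h6]
        calc c₀ * (L t ω * Real.sqrt (L t ω)) = c₀ * Real.sqrt (L t ω) * L t ω := by ring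
          _ ≤ (∑ k, |Q t ω k|) * L t ω := by
              refine mul_le_mul_of_nonneg_right ?_ (hL0 t ω)
              rw [← h4]; exact h3
          _ = L t ω * ∑ k, |Q t ω k| := mul_comm _ _
      nlinarith [mul_le_mul_of_nonneg_left h5 hε.le]
    have hLφI : ∫ ω, L t ω * (Btil - ε * ∑ k, |Q t ω k|) ∂μ ≤
        Btil * (∫ ω, L t ω ∂μ) - (ε * c₀) * ∫ ω, Real.sqrt (L t ω) ^ 3 ∂μ := by
      have hrint : Integrable
          (fun ω => Btil * L t ω - (ε * c₀) * Real.sqrt (L t ω) ^ 3) μ :=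
        ((hLint t).const_mul _).sub (hsq3int.const_mul _)
      calc ∫ ω, L t ω * (Btil - ε * ∑ k, |Q t ω k|) ∂μ
          ≤ ∫ ω, (Btil * L t ω - (ε * c₀) * Real.sqrt (L t ω) ^ 3) ∂μ :=
            integral_mono hLφ_int hrint hpt
        _ = Btil * (∫ ω, L t ω ∂μ) - (ε * c₀) * ∫ ω, Real.sqrt (L t ω) ^ 3 ∂μ := by
            rw [integral_sub ((hLint t).const_mul _) (hsq3int.const_mul _),
              integral_const_mul, integral_const_mul]
    have hS2pt : ∀ ω, S ω ^ 2 ≤ (K:ℝ) * ∑ k, (w k) ^ 2 * (Q t ω k ^ 2 * d t k ω ^ 2) := by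
      intro ω
      have h := sq_sum_le_card_mul_sum_sq (s := (Finset.univ : Finset (Fin K)))
        (f := fun k => w k * Q t ω k * d t k ω)
      rw [Finset.card_univ, Fintype.card_fin] at h
      calc S ω ^ 2 ≤ (K:ℝ) * ∑ k, (w k * Q t ω k * d t k ω) ^ 2 := h
        _ = (K:ℝ) * ∑ k, (w k) ^ 2 * (Q t ω k ^ 2 * d t k ω ^ 2) := by
            congr 1
            exact Finset.sum_congr rfl fun k _ => by ring
    have hS2b_int : Integrable
        (fun ω => (K:ℝ) * ∑ k, (w k) ^ 2 * (Q t ω k ^ 2 * d t k ω ^ 2)) μ :=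
      (integrable_finset_sum _ fun k _ => ((P1 k).1.const_mul _)).const_mul _
    have hS2int : Integrable (fun ω => S ω ^ 2) μ := by
      refine hS2b_int.mono' (hSm.pow_const 2).aestronglyMeasurable (ae_of_all _ fun ω => ?_)
      rw [Real.norm_eq_abs, abs_of_nonneg (sq_nonneg _)]
      exact hS2pt ω
    have hS2I : ∫ ω, S ω ^ 2 ∂μ ≤ CS * ∫ ω, L t ω ∂μ := by
      calc ∫ ω, S ω ^ 2 ∂μ
          ≤ ∫ ω, (K:ℝ) * ∑ k, (w k) ^ 2 * (Q t ω k ^ 2 * d t k ω ^ 2) ∂μ :=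
            integral_mono hS2int hS2b_int hS2pt
        _ = (K:ℝ) * ∑ k, (w k) ^ 2 * ∫ ω, Q t ω k ^ 2 * d t k ω ^ 2 ∂μ := by
            rw [integral_const_mul, integral_finset_sum _ fun k _ => ((P1 k).1.const_mul _)]
            congr 1
            exact Finset.sum_congr rfl fun k _ => integral_const_mul _ _
        _ ≤ (K:ℝ) * ∑ k, (w k) ^ 2 * (cd * ((2 / w k) * ∫ ω, L t ω ∂μ)) := by
            refine mul_le_mul_of_nonneg_left
              (Finset.sum_le_sum fun k _ => ?_) (Nat.cast_nonneg _)
            refine mul_le_mul_of_nonneg_left ?_ (sq_nonneg _)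
            exact (P1 k).2.trans (mul_le_mul_of_nonneg_left (hQ2I t k) hcd0.le)
        _ = CS * ∫ ω, L t ω ∂μ := by
            rw [hCSdef, hcddef]
            have hterm : ∀ k : Fin K, (w k) ^ 2 * ((1 + D) / 2 * ((2 / w k) * ∫ ω, L t ω ∂μ))
                = ((1 + D) * (∫ ω, L t ω ∂μ)) * w k := fun k => by
              have hwk : w k ≠ 0 := (hw k).ne'
              field_simp
            rw [Finset.sum_congr rfl fun k _ => hterm k, ← Finset.mul_sum, ← hWdef]
            ring
    have hR2pt : ∀ ω, R ω ^ 2 ≤ (K:ℝ) * ∑ k, ((w k) ^ 2 / 4) * (d t k ω ^ 4) := by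
      intro ω
      have h := sq_sum_le_card_mul_sum_sq (s := (Finset.univ : Finset (Fin K)))
        (f := fun k => (w k / 2) * (d t k ω) ^ 2)
      rw [Finset.card_univ, Fintype.card_fin] at h
      calc R ω ^ 2 ≤ (K:ℝ) * ∑ k, ((w k / 2) * (d t k ω) ^ 2) ^ 2 := h
        _ = (K:ℝ) * ∑ k, ((w k) ^ 2 / 4) * (d t k ω ^ 4) := by
            congr 1
            exact Finset.sum_congr rfl fun k _ => by ring
    have hR2b_int : Integrable (fun ω => (K:ℝ) * ∑ k, ((w k) ^ 2 / 4) * (d t k ω ^ 4)) μ :=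
      (integrable_finset_sum _ fun k _ => ((hd4int t k).const_mul _)).const_mul _
    have hR2int : Integrable (fun ω => R ω ^ 2) μ := by
      refine hR2b_int.mono' (hRm.pow_const 2).aestronglyMeasurable (ae_of_all _ fun ω => ?_)
      rw [Real.norm_eq_abs, abs_of_nonneg (sq_nonneg _)]
      exact hR2pt ω
    have hR2I : ∫ ω, R ω ^ 2 ∂μ ≤ CR := by
      calc ∫ ω, R ω ^ 2 ∂μ
          ≤ ∫ ω, (K:ℝ) * ∑ k, ((w k) ^ 2 / 4) * (d t k ω ^ 4) ∂μ :=
            integral_mono hR2int hR2b_int hR2pt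
        _ = (K:ℝ) * ∑ k, ((w k) ^ 2 / 4) * ∫ ω, d t k ω ^ 4 ∂μ := by
            rw [integral_const_mul, integral_finset_sum _ fun k _ => ((hd4int t k).const_mul _)]
            congr 1
            exact Finset.sum_congr rfl fun k _ => integral_const_mul _ _
        _ ≤ (K:ℝ) * ∑ k, ((w k) ^ 2 / 4) * D := by
            refine mul_le_mul_of_nonneg_left
              (Finset.sum_le_sum fun k _ => ?_) (Nat.cast_nonneg _)
            exact mul_le_mul_of_nonneg_left (hd4I t k) (by positivity)
        _ = CR := by
            rw [hCRdef, ← Finset.sum_mul]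
            rw [show ∑ k, (w k) ^ 2 / 4 = (∑ k, (w k) ^ 2) / 4 from
              (Finset.sum_div _ _ _).symm]
            ring
    have hΔ2pt : ∀ ω, (L (t+1) ω - L t ω) ^ 2 ≤ 2 * S ω ^ 2 + 2 * R ω ^ 2 := fun ω => by
      rw [hΔ_eq ω]; nlinarith [sq_nonneg (S ω - R ω)]
    have hΔ2bint : Integrable (fun ω => 2 * S ω ^ 2 + 2 * R ω ^ 2) μ :=
      (hS2int.const_mul 2).add (hR2int.const_mul 2)
    have hΔ2int : Integrable (fun ω => (L (t+1) ω - L t ω) ^ 2) μ := by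
      refine hΔ2bint.mono'
        (((hLm (t+1)).sub (hLm t)).pow_const 2).aestronglyMeasurable
        (ae_of_all _ fun ω => ?_)
      rw [Real.norm_eq_abs, abs_of_nonneg (sq_nonneg _)]
      exact hΔ2pt ω
    have hΔ2I : ∫ ω, (L (t+1) ω - L t ω) ^ 2 ∂μ ≤ 2 * (CS * ∫ ω, L t ω ∂μ) + 2 * CR := by
      calc ∫ ω, (L (t+1) ω - L t ω) ^ 2 ∂μ ≤ ∫ ω, (2 * S ω ^ 2 + 2 * R ω ^ 2) ∂μ :=
            integral_mono hΔ2int hΔ2bint hΔ2pt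
        _ = 2 * ∫ ω, S ω ^ 2 ∂μ + 2 * ∫ ω, R ω ^ 2 ∂μ := by
            rw [integral_add (hS2int.const_mul 2) (hR2int.const_mul 2),
              integral_const_mul, integral_const_mul]
        _ ≤ 2 * (CS * ∫ ω, L t ω ∂μ) + 2 * CR := by linarith [hS2I, hR2I]
    have hsq_eq : (fun ω => (L (t+1) ω) ^ 2) = fun ω => (L t ω) ^ 2 +
        (2 * (L t ω * (L (t+1) ω - L t ω)) + (L (t+1) ω - L t ω) ^ 2) :=
      funext fun ω => by ring
    have hGint : Integrable (fun ω =>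
        2 * (L t ω * (L (t+1) ω - L t ω)) + (L (t+1) ω - L t ω) ^ 2) μ :=
      (hLΔ_int.const_mul 2).add hΔ2int
    have hG1int : Integrable (fun ω => 2 * (L t ω * (L (t+1) ω - L t ω))) μ :=
      hLΔ_int.const_mul 2
    have hint2 : Integrable (fun ω => (L (t+1) ω) ^ 2) μ := by
      rw [hsq_eq]; exact hA2.add hGint
    have hintegral : ∫ ω, (L (t+1) ω) ^ 2 ∂μ = ∫ ω, (L t ω) ^ 2 ∂μ +
        (2 * ∫ ω, L t ω * (L (t+1) ω - L t ω) ∂μ + ∫ ω, (L (t+1) ω - L t ω) ^ 2 ∂μ) := by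
      rw [hsq_eq, integral_add hA2 hGint, integral_add hG1int hΔ2int, integral_const_mul]
    have hθL : ∫ ω, L t ω ∂μ ≤
        θ * (∫ ω, Real.sqrt (L t ω) ^ 3 ∂μ) + 1 / θ ^ 2 := by
      have hptθ : ∀ ω, L t ω ≤ θ * Real.sqrt (L t ω) ^ 3 + 1 / θ ^ 2 := by
        intro ω
        have hs0 : 0 ≤ Real.sqrt (L t ω) := Real.sqrt_nonneg _
        have hs2 : Real.sqrt (L t ω) ^ 2 = L t ω := Real.sq_sqrt (hL0 t ω)
        have h70 : (0:ℝ) ≤ 1 / θ ^ 2 := by positivity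
        conv_lhs => rw [← hs2]
        rcases le_or_gt (1 / θ) (Real.sqrt (L t ω)) with h | h
        · have h1 : 1 ≤ θ * Real.sqrt (L t ω) := by
            rw [div_le_iff₀ hθ] at h
            nlinarith
          nlinarith [mul_nonneg (sq_nonneg (Real.sqrt (L t ω))) (by linarith :
            (0:ℝ) ≤ θ * Real.sqrt (L t ω) - 1), h70]
        · have h1 : Real.sqrt (L t ω) ^ 2 < (1 / θ) ^ 2 :=
            pow_lt_pow_left₀ h hs0 (by norm_num)
          have h2 : (1 / θ) ^ 2 = 1 / θ ^ 2 := by rw [div_pow, one_pow]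
          nlinarith [mul_nonneg hθ.le (pow_nonneg hs0 3)]
      calc ∫ ω, L t ω ∂μ ≤ ∫ ω, (θ * Real.sqrt (L t ω) ^ 3 + 1 / θ ^ 2) ∂μ :=
            integral_mono (hLint t) ((hsq3int.const_mul θ).add (integrable_const _)) hptθ
        _ = θ * (∫ ω, Real.sqrt (L t ω) ^ 3 ∂μ) + 1 / θ ^ 2 := by
            rw [integral_add (hsq3int.const_mul θ) (integrable_const _),
              integral_const_mul, integral_const]
            simp [measure_univ]
    refine ⟨hint2, ?_⟩
    have hfinal1 : a * ∫ ω, L t ω ∂μ ≤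
        ε * c₀ * (∫ ω, Real.sqrt (L t ω) ^ 3 ∂μ) + a / θ ^ 2 := by
      calc a * ∫ ω, L t ω ∂μ
          ≤ a * (θ * (∫ ω, Real.sqrt (L t ω) ^ 3 ∂μ) + 1 / θ ^ 2) :=
            mul_le_mul_of_nonneg_left hθL ha.le
        _ = (a * θ) * (∫ ω, Real.sqrt (L t ω) ^ 3 ∂μ) + a / θ ^ 2 := by ring
        _ = ε * c₀ * (∫ ω, Real.sqrt (L t ω) ^ 3 ∂μ) + a / θ ^ 2 := by rw [haθ]
    have haL : a * ∫ ω, L t ω ∂μ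
        = 2 * (Btil * ∫ ω, L t ω ∂μ) + 2 * (CS * ∫ ω, L t ω ∂μ) := by
      rw [hadef]; ring
    have hC4eq : C₄ = a / θ ^ 2 + 2 * CR := hC₄def
    rw [hintegral]
    have hcomb := hdriftI.trans hLφI
    linarith [hcomb, hΔ2I, hfinal1, haL]
  -- induction on integrability
  have hA0' : Integrable (fun ω => (L 0 ω) ^ 2) μ := by
    refine hL0four.congr (ae_of_all _ fun ω => ?_)
    show Real.sqrt (L 0 ω) ^ 4 = (L 0 ω) ^ 2
    have h1 : Real.sqrt (L 0 ω) ^ 4 = (Real.sqrt (L 0 ω) ^ 2) ^ 2 := by ring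
    rw [h1, Real.sq_sqrt (hL0 0 ω)]
  have hAint : ∀ t, Integrable (fun ω => (L t ω) ^ 2) μ := by
    intro t
    induction t with
    | zero => exact hA0'
    | succ n ih => exact (step n ih).1
  have hineq : ∀ t, (∫ ω, (L (t + 1) ω) ^ 2 ∂μ) - ∫ ω, (L t ω) ^ 2 ∂μ ≤
      -(ε * c₀) * ∫ ω, Real.sqrt (L t ω) ^ 3 ∂μ + C₄ := fun t => (step t (hAint t)).2
  have hT0 : ∀ t, 0 ≤ ∫ ω, Real.sqrt (L t ω) ^ 3 ∂μ :=
    fun t => integral_nonneg fun ω => pow_nonneg (Real.sqrt_nonneg _) 3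
  have hA0 : ∀ t, 0 ≤ ∫ ω, (L t ω) ^ 2 ∂μ := fun t => integral_nonneg fun ω => sq_nonneg _
  have htel : ∀ M : ℕ, ε * c₀ * ∑ t ∈ Finset.range M, ∫ ω, Real.sqrt (L t ω) ^ 3 ∂μ ≤
      (∫ ω, (L 0 ω) ^ 2 ∂μ) - (∫ ω, (L M ω) ^ 2 ∂μ) + C₄ * M := by
    intro M
    induction M with
    | zero => simp
    | succ n ih =>
      rw [Finset.sum_range_succ, mul_add]
      have h1 := hineq n
      have h2 : ε * c₀ * ∫ ω, Real.sqrt (L n ω) ^ 3 ∂μ ≤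
          (∫ ω, (L n ω) ^ 2 ∂μ) - (∫ ω, (L (n+1) ω) ^ 2 ∂μ) + C₄ := by linarith
      push_cast
      linarith
  refine ⟨((∫ ω, (L 0 ω) ^ 2 ∂μ) + C₄) / (ε * c₀),
    div_pos (add_pos_of_nonneg_of_pos (hA0 0) hC₄) (mul_pos hε hc₀), fun M hM => ?_⟩
  have hM1 : (1 : ℝ) ≤ (M : ℝ) := by exact_mod_cast hM
  have hMpos : (0 : ℝ) < (M : ℝ) := by linarith
  have hsum0 : 0 ≤ ∑ t ∈ Finset.range M, ∫ ω, Real.sqrt (L t ω) ^ 3 ∂μ :=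
    Finset.sum_nonneg fun t _ => hT0 t
  have h3 := htel M
  have h4 : ε * c₀ * ∑ t ∈ Finset.range M, ∫ ω, Real.sqrt (L t ω) ^ 3 ∂μ ≤
      (∫ ω, (L 0 ω) ^ 2 ∂μ) + C₄ * M := by
    have := hA0 M; linarith
  rw [le_div_iff₀ (by positivity : (0:ℝ) < ε * c₀)]
  set X : ℝ := ∑ t ∈ Finset.range M, ∫ ω, Real.sqrt (L t ω) ^ 3 ∂μ with hXdef
  set A0 : ℝ := ∫ ω, (L 0 ω) ^ 2 ∂μ with hA0def
  have hA00 : 0 ≤ A0 := hA0 0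
  have hMinvle : (1 / (M:ℝ)) ≤ 1 := by rw [div_le_one hMpos]; exact hM1
  have h5 : (1 / (M:ℝ)) * (ε * c₀ * X) ≤ (1 / (M:ℝ)) * (A0 + C₄ * M) :=
    mul_le_mul_of_nonneg_left h4 (by positivity)
  have h6 : (1 / (M:ℝ)) * A0 ≤ A0 := mul_le_of_le_one_left hA00 hMinvle
  have h7 : (1 / (M:ℝ)) * (C₄ * M) = C₄ := by field_simp
  calc 1 / (M:ℝ) * X * (ε * c₀) = (1 / (M:ℝ)) * (ε * c₀ * X) := by ring
    _ ≤ (1 / (M:ℝ)) * (A0 + C₄ * M) := h5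
    _ = (1 / (M:ℝ)) * A0 + (1 / (M:ℝ)) * (C₄ * M) := by ring
    _ ≤ A0 + C₄ := by rw [h7]; linarith
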